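/- Let (X,≼) be a partial order and let x, y ∈ X be incomparable (x ⋈ y). Then the following are equivalent: (i) there exists a Debreu separable linear extension ≼' of ≼ with x ≼' y; (ii) there exists an injective monotone u : X → ℝ with u(x) ≤ u(y); (iii) there exists a sequence (≼ₙ)ₙ≥₀ of partial orders on X, each extending ≼ and with ≼ₙ₊₁ extending ≼ₙ for all n ≥ 0, such that the limit ≼' = lim ≼ₙ is a Debreu separable linear extension of ≼ with x ≼' y. -/
import Mathlib


/-- A binary relation is a partial order: reflexive, antisymmetric, transitive. -/
def IsPartialOrderRel {X : Type*} (r : X → X → Prop) : Prop :=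
  (∀ x, r x x) ∧ (∀ x y, r x y → r y x → x = y) ∧ (∀ x y z, r x y → r y z → r x z)

/-- `r'` extends `r`. -/
def RelExtends {X : Type*} (r r' : X → X → Prop) : Prop :=
  ∀ x y, r x y → r' x y

/-- `r` is total: any two elements are comparable. -/
def TotalRel {X : Type*} (r : X → X → Prop) : Prop :=
  ∀ x y, r x y ∨ r y x

/-- `r'` is a linear extension of `r`: a total partial order extending `r`. -/
def IsLinearExtension {X : Type*} (r r' : X → X → Prop) : Prop :=
  IsPartialOrderRel r' ∧ TotalRel r' ∧ RelExtends r r'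

/-- `x` and `y` are incomparable with respect to `r`. -/
def Incomp {X : Type*} (r : X → X → Prop) (x y : X) : Prop :=
  ¬ r x y ∧ ¬ r y x

/-- `D` is Debreu dense for `r`. -/
def DebreuDense {X : Type*} (r : X → X → Prop) (D : Set X) : Prop :=
  ∀ x y, r x y → ¬ r y x → ∃ d ∈ D, r x d ∧ r d y

/-- `(X, r)` is Debreu separable: it has a countable Debreu dense subset. -/
def DebreuSeparable {X : Type*} (r : X → X → Prop) : Prop :=
  ∃ D : Set X, D.Countable ∧ DebreuDense r D

/-- The limit of a sequence of binary relations. -/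
def LimitRel {X : Type*} (r : ℕ → X → X → Prop) : X → X → Prop :=
  fun x y => ∃ n₀ : ℕ, ∀ n, n₀ ≤ n → r n x y

/-- From a Debreu separable total partial order one gets an injective monotone. -/
lemma lemA {X : Type*} (r' : X → X → Prop) (hpo : IsPartialOrderRel r') (ht : TotalRel r')
    (hsep : DebreuSeparable r') :
    ∃ u : X → ℝ, (∀ a b, r' a b → u a ≤ u b) ∧ Function.Injective u := by
  obtain ⟨hrefl, hanti, htrans⟩ := hpo
  obtain ⟨D, hDc, hDd⟩ := hsep
  rcases D.eq_empty_or_nonempty with hD | hD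
  · refine ⟨fun _ => 0, fun _ _ _ => le_rfl, fun a b _ => ?_⟩
    rcases ht a b with h | h
    · by_cases h2 : r' b a
      · exact hanti a b h h2
      · obtain ⟨d, hd, -⟩ := hDd a b h h2; simp [hD] at hd
    · by_cases h2 : r' a b
      · exact hanti a b h2 h
      · obtain ⟨d, hd, -⟩ := hDd b a h h2; exact absurd hd (by simp [hD])
  · classical
    obtain ⟨f, hf⟩ := Set.Countable.exists_eq_range hDc hD
    set g : X → ℕ → ℝ := fun a n =>
      (if r' (f n) a then ((1:ℝ)/2)^n else 0)
      + (if r' (f n) a ∧ ¬ r' a (f n) then ((1:ℝ)/2)^n else 0) with hg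
    have hwpos : ∀ n : ℕ, (0:ℝ) < ((1:ℝ)/2)^n := fun n => by positivity
    have hnonneg : ∀ a n, 0 ≤ g a n := by
      intro a n; simp only [hg]; positivity
    have hbound : ∀ a n, g a n ≤ 2 * ((1:ℝ)/2)^n := by
      intro a n; simp only [hg, two_mul]
      gcongr <;> split <;> simp [le_of_lt (hwpos n)]
    have hsumg : Summable (fun n : ℕ => 2 * ((1:ℝ)/2)^n) :=
      (summable_geometric_of_lt_one (by norm_num) (by norm_num)).mul_left 2
    have hsum : ∀ a, Summable (g a) := fun a =>
      Summable.of_nonneg_of_le (hnonneg a) (hbound a) hsumg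
    have hmono : ∀ a b, r' a b → ∀ n, g a n ≤ g b n := by
      intro a b hab n
      simp only [hg]
      gcongr
      · split_ifs with h1 h2
        · exact le_rfl
        · exact absurd (htrans _ _ _ h1 hab) h2
        · exact le_of_lt (hwpos n)
        · exact le_rfl
      · split_ifs with h1 h2
        · exact le_rfl
        · exact absurd ⟨htrans _ _ _ h1.1 hab, fun hb => h1.2 (htrans _ _ _ hab hb)⟩ h2
        · exact le_of_lt (hwpos n)
        · exact le_rfl
    have hstrict : ∀ a b, r' a b → ¬ r' b a → (∑' n, g a n) < (∑' n, g b n) := by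
      intro a b hab hba
      obtain ⟨d, hdD, had, hdb⟩ := hDd a b hab hba
      rw [hf] at hdD; obtain ⟨n, rfl⟩ := hdD
      refine Summable.tsum_lt_tsum (hmono a b hab) (i := n) ?_ (hsum a) (hsum b)
      by_cases hda : f n = a
      · have h1 : r' (f n) a := hda ▸ hrefl a
        have h2 : ¬ (r' (f n) a ∧ ¬ r' a (f n)) := fun h => h.2 (hda ▸ hrefl a)
        have h3 : r' (f n) b := hdb
        have h4 : r' (f n) b ∧ ¬ r' b (f n) := ⟨hdb, fun hb => hba (hda ▸ hb)⟩
        simp only [hg, if_pos h1, if_neg h2, if_pos h3, if_pos h4]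
        linarith [hwpos n]
      · have h1 : ¬ r' (f n) a := fun h => hda (hanti _ _ h had)
        have h2 : ¬ (r' (f n) a ∧ ¬ r' a (f n)) := fun h => h1 h.1
        simp only [hg, if_pos hdb, if_neg h1, if_neg h2]
        have : (0:ℝ) ≤ if r' (f n) b ∧ ¬ r' b (f n) then ((1:ℝ)/2)^n else 0 := by positivity
        linarith [hwpos n]
    refine ⟨fun a => ∑' n, g a n,
      fun a b hab => Summable.tsum_le_tsum (hmono a b hab) (hsum a) (hsum b), ?_⟩
    intro a b hab
    by_contra hne
    rcases ht a b with h | h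
    · exact absurd hab (ne_of_lt (hstrict a b h (fun h2 => hne (hanti a b h h2))))
    · exact absurd hab.symm (ne_of_lt (hstrict b a h (fun h2 => hne (hanti a b h2 h))))

/-- The total order induced by an injective real function is Debreu separable. -/
lemma lemB {X : Type*} (u : X → ℝ) (hu : Function.Injective u) (x₀ : X) :
    DebreuSeparable (fun a b : X => a = b ∨ u a < u b) := by
  classical
  set r' : X → X → Prop := fun a b => a = b ∨ u a < u b with hr'
  set F : ℚ × ℚ → X := fun pq =>
    if h : ∃ d : X, (pq.1:ℝ) < u d ∧ u d < (pq.2:ℝ) then h.choose else x₀ with hF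
  set J : Set (X × X) := {p | u p.1 < u p.2 ∧ ∀ c, ¬ (u p.1 < u c ∧ u c < u p.2)} with hJ
  set G : X × X → ℚ := fun p =>
    if h : ∃ q : ℚ, u p.1 < (q:ℝ) ∧ (q:ℝ) < u p.2 then h.choose else 0 with hG
  have hGmem : ∀ p ∈ J, u p.1 < (G p : ℝ) ∧ (G p : ℝ) < u p.2 := by
    intro p hp
    have h : ∃ q : ℚ, u p.1 < (q:ℝ) ∧ (q:ℝ) < u p.2 := by
      obtain ⟨q, hq1, hq2⟩ := exists_rat_btwn hp.1
      exact ⟨q, hq1, hq2⟩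
    simpa only [hG, dif_pos h] using h.choose_spec
  have hGinj : Set.InjOn G J := by
    intro p hp q hq hpq
    obtain ⟨h1, h2⟩ := hGmem p hp
    obtain ⟨h3, h4⟩ := hGmem q hq
    rw [hpq] at h1 h2
    have e1 : u p.1 = u q.1 := by
      by_contra hne
      rcases lt_or_gt_of_ne hne with h | h
      · exact hp.2 q.1 ⟨h, lt_trans h3 h2⟩
      · exact hq.2 p.1 ⟨h, lt_trans h1 h4⟩
    have e2 : u p.2 = u q.2 := by
      by_contra hne
      rcases lt_or_gt_of_ne hne with h | h
      · exact hq.2 p.2 ⟨lt_trans h3 h2, h⟩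
      · exact hp.2 q.2 ⟨lt_trans h1 h4, h⟩
    exact Prod.ext (hu e1) (hu e2)
  have hJc : J.Countable := by
    have : Countable J := by
      have : Function.Injective (fun p : J => G p.1) := by
        intro a b hab
        exact Subtype.ext (hGinj a.2 b.2 hab)
      exact Function.Injective.countable this
    exact Set.countable_coe_iff.mp this
  refine ⟨Set.range F ∪ (Prod.fst '' J ∪ Prod.snd '' J),
    (Set.countable_range F).union ((hJc.image _).union (hJc.image _)), ?_⟩
  intro a b hab hba
  have hlt : u a < u b := by
    rcases hab with rfl | h
    · exact absurd (Or.inl rfl) hba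
    · exact h
  by_cases hc : ∃ c, u a < u c ∧ u c < u b
  · obtain ⟨c, hc1, hc2⟩ := hc
    obtain ⟨p, hp1, hp2⟩ := exists_rat_btwn hc1
    obtain ⟨q, hq1, hq2⟩ := exists_rat_btwn hc2
    have hex : ∃ d : X, ((p : ℝ)) < u d ∧ u d < ((q : ℝ)) := ⟨c, hp2, hq1⟩
    have hFspec : (p:ℝ) < u (F (p,q)) ∧ u (F (p,q)) < (q:ℝ) := by
      have : F (p, q) = hex.choose := by simp only [hF]; exact dif_pos hex
      rw [this]; exact hex.choose_spec
    refine ⟨F (p,q), Or.inl ⟨(p,q), rfl⟩, Or.inr (lt_trans hp1 hFspec.1),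
      Or.inr (lt_trans hFspec.2 hq2)⟩
  · push_neg at hc
    have hJab : (a, b) ∈ J := ⟨hlt, fun c h => (not_lt.mpr (hc c h.1)) h.2⟩
    exact ⟨a, Or.inr (Or.inl ⟨(a,b), hJab, rfl⟩), Or.inl rfl, Or.inr hlt⟩

/-- From an injective monotone, a Debreu separable linear extension. -/
lemma lemC {X : Type*} (r : X → X → Prop) (hr : IsPartialOrderRel r)
    (u : X → ℝ) (hm : ∀ a b, r a b → u a ≤ u b) (hu : Function.Injective u) (x₀ : X) :
    IsLinearExtension r (fun a b : X => a = b ∨ u a < u b) ∧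
    DebreuSeparable (fun a b : X => a = b ∨ u a < u b) := by
  refine ⟨⟨⟨fun a => Or.inl rfl, ?_, ?_⟩, ?_, ?_⟩, lemB u hu x₀⟩
  · rintro a b (h1 | h1) (h2 | h2)
    · exact h1
    · exact h1
    · exact h2.symm
    · exact absurd (lt_trans h1 h2) (lt_irrefl _)
  · rintro a b c (rfl | h1) h2
    · exact h2
    · rcases h2 with rfl | h2
      · exact Or.inr h1
      · exact Or.inr (lt_trans h1 h2)
  · intro a b
    rcases lt_trichotomy (u a) (u b) with h | h | h
    · exact Or.inl (Or.inr h)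
    · exact Or.inl (Or.inl (hu h))
    · exact Or.inr (Or.inr h)
  · intro a b hab
    by_cases h : a = b
    · exact Or.inl h
    · exact Or.inr (lt_of_le_of_ne (hm a b hab) (fun he => h (hu he)))

theorem debreuSeparable_linearExtension_tfae {X : Type*}
    (r : X → X → Prop) (hr : IsPartialOrderRel r)
    (x y : X) (hxy : Incomp r x y) :
    ((∃ r' : X → X → Prop,
        IsLinearExtension r r' ∧ DebreuSeparable r' ∧ r' x y) ↔
      (∃ u : X → ℝ,
        (∀ a b, r a b → u a ≤ u b) ∧ Function.Injective u ∧ u x ≤ u y)) ∧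
    ((∃ u : X → ℝ,
        (∀ a b, r a b → u a ≤ u b) ∧ Function.Injective u ∧ u x ≤ u y) ↔
      (∃ S : ℕ → X → X → Prop,
        (∀ n, IsPartialOrderRel (S n)) ∧
        (∀ n, RelExtends r (S n)) ∧
        (∀ n, RelExtends (S n) (S (n + 1))) ∧
        IsLinearExtension r (LimitRel S) ∧
        DebreuSeparable (LimitRel S) ∧
        LimitRel S x y)) := by
  have fwd : (∃ r' : X → X → Prop,
      IsLinearExtension r r' ∧ DebreuSeparable r' ∧ r' x y) →
      (∃ u : X → ℝ,
        (∀ a b, r a b → u a ≤ u b) ∧ Function.Injective u ∧ u x ≤ u y) := by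
    rintro ⟨r', ⟨hpo, ht, hext⟩, hsep, hxy'⟩
    obtain ⟨u, hm, hu⟩ := lemA r' hpo ht hsep
    exact ⟨u, fun a b hab => hm a b (hext a b hab), hu, hm x y hxy'⟩
  have bwd : (∃ u : X → ℝ,
      (∀ a b, r a b → u a ≤ u b) ∧ Function.Injective u ∧ u x ≤ u y) →
      (∃ r' : X → X → Prop,
        IsLinearExtension r r' ∧ DebreuSeparable r' ∧ r' x y) := by
    rintro ⟨u, hm, hu, hle⟩
    obtain ⟨hlin, hsep⟩ := lemC r hr u hm hu x
    refine ⟨_, hlin, hsep, ?_⟩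
    have hne : x ≠ y := fun he => hxy.1 (he ▸ hr.1 x)
    exact Or.inr (lt_of_le_of_ne hle (fun he => hne (hu he)))
  refine ⟨⟨fwd, bwd⟩, ?_, ?_⟩
  · intro h
    obtain ⟨r', hlin, hsep, hxy'⟩ := bwd h
    refine ⟨fun _ => r', fun _ => hlin.1, fun _ => hlin.2.2, fun _ => fun a b h => h, ?_⟩
    have hL : LimitRel (fun _ : ℕ => r') = r' := by
      funext a b
      exact propext ⟨fun ⟨n₀, h⟩ => h n₀ le_rfl, fun h => ⟨0, fun _ _ => h⟩⟩
    rw [hL]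
    exact ⟨hlin, hsep, hxy'⟩
  · rintro ⟨S, _, _, _, hlin, hsep, hxy'⟩
    exact fwd ⟨LimitRel S, hlin, hsep, hxy'⟩
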